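/- Let M be a feasible matching for a p-subset A of [p+q], let (i,j) ∈ M be an arc, and set A' = A △ {i,j}. Then the sums Σ(A) = Σ_{a∈A} a and Σ(A') differ by an odd number. In particular, exchanging along a single arc always changes the parity of the element-sum of the set. -/

import Mathlib

open Finset

/-- The two-element set of endpoints of an arc `π = (i,j)`. -/
def arcSet (π : ℕ × ℕ) : Finset ℕ := {π.1, π.2}

/-- `M` is a feasible matching for the `p`-subset `A` of `[p+q] = {1,…,p+q}`:
`q` pairwise disjoint nested arcs `(i,j)`, `i<j`, each containing exactly one element
of `A` and one of its complement, with no free element covered by an arc's interval. -/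
def IsFeasibleMatching (p q : ℕ) (A : Finset ℕ) (M : Finset (ℕ × ℕ)) : Prop :=
  M.card = q ∧
  (∀ π ∈ M, 1 ≤ π.1 ∧ π.1 < π.2 ∧ π.2 ≤ p + q) ∧
  (∀ π ∈ M, ∀ π' ∈ M, π ≠ π' → Disjoint (arcSet π) (arcSet π')) ∧
  (∀ π ∈ M, (arcSet π ∩ A).card = 1 ∧
            (arcSet π ∩ (Finset.Icc 1 (p + q) \ A)).card = 1) ∧
  (∀ π ∈ M, ∀ π' ∈ M,
      Disjoint (Finset.Icc π.1 π.2) (Finset.Icc π'.1 π'.2) ∨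
      Finset.Icc π.1 π.2 ⊆ Finset.Icc π'.1 π'.2 ∨
      Finset.Icc π'.1 π'.2 ⊆ Finset.Icc π.1 π.2) ∧
  (∀ k ∈ Finset.Icc 1 (p + q), (∀ π ∈ M, k ∉ arcSet π) →
      ∀ π ∈ M, k ∉ Finset.Icc π.1 π.2)

open Classical in
/-- The number of members of the collection `𝒜` for which `M` is a feasible matching. -/
noncomputable def feasCount (p q : ℕ) (𝒜 : Finset (Finset ℕ)) (M : Finset (ℕ × ℕ)) : ℕ :=
  (𝒜.filter (fun A => IsFeasibleMatching p q A M)).card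

/-- Two collections of `p`-subsets of `[p+q]` are balanced if every matching is a
feasible matching for equally many members of each. -/
def BalancedPair (p q : ℕ) (𝒜 𝒜' : Finset (Finset ℕ)) : Prop :=
  ∀ M : Finset (ℕ × ℕ), feasCount p q 𝒜 M = feasCount p q 𝒜' M


lemma arc_odd (p q : ℕ) (A : Finset ℕ) (M : Finset (ℕ × ℕ))
    (hM : IsFeasibleMatching p q A M) (π : ℕ × ℕ) (hπ : π ∈ M) :
    Odd (π.2 - π.1) := by
  classical
  obtain ⟨hcard, hb, hdisj, hone, hnest, hfree⟩ := hM
  obtain ⟨h1, hlt, h2⟩ := hb π hπ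
  set i := π.1 with hi
  set j := π.2 with hj
  set S : Finset ℕ := Finset.Icc (i+1) (j-1) with hS
  set T : Finset (ℕ × ℕ) := M.filter (fun π' => arcSet π' ⊆ S) with hT
  have hSeq : S = T.biUnion arcSet := by
    ext k
    simp only [hT, Finset.mem_biUnion, Finset.mem_filter]
    constructor
    · intro hk
      have hk' : i + 1 ≤ k ∧ k ≤ j - 1 := Finset.mem_Icc.mp hk
      have hik : i < k := by omega
      have hkj : k < j := by omega
      have hkI : k ∈ Finset.Icc 1 (p + q) := by
        simp only [Finset.mem_Icc]; omega
      have hex : ¬ (∀ π' ∈ M, k ∉ arcSet π') := by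
        intro h
        have := hfree k hkI h π hπ
        simp only [Finset.mem_Icc] at this
        omega
      push_neg at hex
      obtain ⟨π', hπ', hkπ'⟩ := hex
      have hne : π' ≠ π := by
        intro h
        subst h
        simp only [arcSet, Finset.mem_insert, Finset.mem_singleton] at hkπ'
        omega
      obtain ⟨h1', hlt', h2'⟩ := hb π' hπ'
      have hkmem : k ∈ Finset.Icc π'.1 π'.2 := by
        simp only [arcSet, Finset.mem_insert, Finset.mem_singleton] at hkπ'
        simp only [Finset.mem_Icc]; omega
      have hdd := hdisj π hπ π' hπ' hne.symm
      have hiπ : i ∈ arcSet π := by simp [arcSet, hi]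
      have hjπ : j ∈ arcSet π := by simp [arcSet, hj]
      have hp1' : π'.1 ∈ arcSet π' := by simp [arcSet]
      have hp2' : π'.2 ∈ arcSet π' := by simp [arcSet]
      have hd1 : π'.1 ≠ i ∧ π'.1 ≠ j ∧ π'.2 ≠ i ∧ π'.2 ≠ j := by
        refine ⟨fun h => ?_, fun h => ?_, fun h => ?_, fun h => ?_⟩
        · exact Finset.disjoint_left.mp hdd hiπ (by rw [← h]; exact hp1')
        · exact Finset.disjoint_left.mp hdd hjπ (by rw [← h]; exact hp1')
        · exact Finset.disjoint_left.mp hdd hiπ (by rw [← h]; exact hp2')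
        · exact Finset.disjoint_left.mp hdd hjπ (by rw [← h]; exact hp2')
      have hsub : arcSet π' ⊆ S := by
        rcases hnest π hπ π' hπ' with hc | hc | hc
        · exfalso
          exact Finset.disjoint_right.mp hc hkmem (by simp only [Finset.mem_Icc]; omega)
        · exfalso
          have hji : i ∈ Finset.Icc π'.1 π'.2 := hc (by simp only [Finset.mem_Icc]; omega)
          have hjj : j ∈ Finset.Icc π'.1 π'.2 := hc (by simp only [Finset.mem_Icc]; omega)
          simp only [Finset.mem_Icc] at hji hjj
          simp only [arcSet, Finset.mem_insert, Finset.mem_singleton] at hkπ'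
          omega
        · have hp1 : π'.1 ∈ Finset.Icc i j := hc (by simp only [Finset.mem_Icc]; omega)
          have hp2 : π'.2 ∈ Finset.Icc i j := hc (by simp only [Finset.mem_Icc]; omega)
          simp only [Finset.mem_Icc] at hp1 hp2
          intro x hx
          simp only [arcSet, Finset.mem_insert, Finset.mem_singleton] at hx
          simp only [hS, Finset.mem_Icc]
          rcases hx with h | h <;> subst h <;> omega
      exact ⟨π', ⟨hπ', hsub⟩, hkπ'⟩
    · rintro ⟨π', ⟨_, hsub⟩, hk⟩
      exact hsub hk
  have hdisjT : ∀ π₁ ∈ T, ∀ π₂ ∈ T, π₁ ≠ π₂ → Disjoint (arcSet π₁) (arcSet π₂) := by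
    intro π₁ h₁ π₂ h₂ hne
    exact hdisj π₁ (Finset.mem_filter.mp h₁).1 π₂ (Finset.mem_filter.mp h₂).1 hne
  have hcardS : S.card = 2 * T.card := by
    rw [hSeq, Finset.card_biUnion hdisjT]
    rw [Finset.sum_congr rfl (fun π' h => ?_), Finset.sum_const, smul_eq_mul, mul_comm]
    have := (hb π' (Finset.mem_filter.mp h).1).2.1
    simp only [arcSet]
    rw [Finset.card_insert_of_notMem (by simp; omega), Finset.card_singleton]
  have hcS : S.card = j - i - 1 := by
    simp only [hS, Nat.card_Icc]; omega
  refine ⟨T.card, ?_⟩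
  omega

/-- Exchanging a `p`-subset `A` of `[p+q]` along a single arc `(i,j)` of a feasible
matching for `A` changes the parity of the element-sum: `Σ(A) - Σ(A △ {i,j})` is odd. -/
theorem stmt7 (p q : ℕ) (A : Finset ℕ) (hA : A ⊆ Finset.Icc 1 (p + q))
    (hAcard : A.card = p) (M : Finset (ℕ × ℕ))
    (hM : IsFeasibleMatching p q A M) (π : ℕ × ℕ) (hπ : π ∈ M) :
    Odd ((∑ a ∈ A, (a : ℤ)) - ∑ a ∈ symmDiff A (arcSet π), (a : ℤ)) := by
  classical
  have hodd := arc_odd p q A M hM π hπ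
  obtain ⟨_, hb, _, hone, _, _⟩ := hM
  obtain ⟨i, j⟩ := π
  obtain ⟨h1, hlt, h2⟩ := hb (i, j) hπ
  simp only at h1 hlt h2 hodd
  have hij : i ≠ j := by omega
  have hone1 := (hone (i, j) hπ).1
  obtain ⟨c, hc⟩ := hodd
  have hcases : (i ∈ A ∧ j ∉ A) ∨ (j ∈ A ∧ i ∉ A) := by
    by_cases hiA : i ∈ A <;> by_cases hjA : j ∈ A
    · exfalso
      have : arcSet (i, j) ∩ A = {i, j} := by
        ext x
        simp only [arcSet, Finset.mem_inter, Finset.mem_insert, Finset.mem_singleton]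
        constructor
        · tauto
        · rintro (h | h) <;> subst h <;> tauto
      rw [this] at hone1
      rw [Finset.card_insert_of_notMem (by simpa using hij), Finset.card_singleton] at hone1
      omega
    · left; exact ⟨hiA, hjA⟩
    · right; exact ⟨hjA, hiA⟩
    · exfalso
      have : arcSet (i, j) ∩ A = ∅ := by
        ext x
        simp only [arcSet, Finset.mem_inter, Finset.mem_insert, Finset.mem_singleton,
          Finset.notMem_empty, iff_false]
        rintro ⟨h | h, hx⟩ <;> subst h <;> tauto
      rw [this] at hone1
      simp at hone1
  rcases hcases with ⟨hiA, hjA⟩ | ⟨hjA, hiA⟩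
  · have hset : symmDiff A (arcSet (i, j)) = insert j (A.erase i) := by
      ext x
      simp only [Finset.mem_symmDiff, arcSet, Finset.mem_insert, Finset.mem_singleton,
        Finset.mem_erase]
      constructor
      · rintro (⟨hx, hn⟩ | ⟨h | h, hn⟩)
        · right; exact ⟨fun h => hn (Or.inl h), hx⟩
        · exact absurd hiA (h ▸ hn)
        · left; exact h
      · rintro (h | ⟨hne, hx⟩)
        · subst h; right; exact ⟨Or.inr rfl, hjA⟩
        · left; exact ⟨hx, by rintro (h | h) <;> [exact hne h; exact hjA (h ▸ hx)]⟩
    rw [hset, Finset.sum_insert (by simp [hjA]), ← Finset.add_sum_erase A _ hiA]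
    refine ⟨-(c:ℤ) - 1, ?_⟩
    push_cast
    omega
  · have hset : symmDiff A (arcSet (i, j)) = insert i (A.erase j) := by
      ext x
      simp only [Finset.mem_symmDiff, arcSet, Finset.mem_insert, Finset.mem_singleton,
        Finset.mem_erase]
      constructor
      · rintro (⟨hx, hn⟩ | ⟨h | h, hn⟩)
        · right; exact ⟨fun h => hn (Or.inr h), hx⟩
        · left; exact h
        · exact absurd hjA (h ▸ hn)
      · rintro (h | ⟨hne, hx⟩)
        · subst h; right; exact ⟨Or.inl rfl, hiA⟩
        · left; exact ⟨hx, by rintro (h | h) <;> [exact hiA (h ▸ hx); exact hne h]⟩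
    rw [hset, Finset.sum_insert (by simp [hiA]), ← Finset.add_sum_erase A _ hjA]
    refine ⟨(c:ℤ), ?_⟩
    push_cast
    omega
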